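/- Let δ, ε > 0 and let τ, ψ : (−δ, ε) → ℝ be C^∞ functions such that: (a) τ'(0) = 0 ≠ τ''(0) and τ'·τ'' ≠ 0 everywhere on (−δ, 0) ∪ (0, ε); (b) the restrictions τ|_{(−δ,0)} and τ|_{(0,ε)} have the same range I ⊂ ℝ; (c) ψ(t) = G(τ(t)) for some function G : I → ℝ and all t ∈ (−δ, 0) ∪ (0, ε). Then G admits a C^∞ extension to the half-open interval I ∪ {τ(0)}. -/

import Mathlib

open Set


open Set Filter MeasureTheory intervalIntegral
open scoped Topology
open scoped ContDiff
open scoped Interval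

lemma inftop_add_one_le : ((⊤:ℕ∞) : WithTop ℕ∞) + 1 ≤ ((⊤:ℕ∞) : WithTop ℕ∞) := by simp

lemma one_le_inftop : (1 : WithTop ℕ∞) ≤ ((⊤:ℕ∞) : WithTop ℕ∞) := by exact_mod_cast le_top

lemma inftop_ne_zero : ((⊤:ℕ∞) : WithTop ℕ∞) ≠ 0 := by simp

lemma aux_mul_mem {a b x t : ℝ} (ha : a < 0) (hb : 0 < b) (hx : x ∈ Ioo a b)
    (ht : t ∈ Icc (0:ℝ) 1) : t * x ∈ Ioo a b := by
  obtain ⟨hx1, hx2⟩ := hx; obtain ⟨ht0, ht1⟩ := ht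
  constructor
  · rcases le_or_gt 0 x with h | h
    · nlinarith
    · nlinarith
  · rcases le_or_gt 0 x with h | h
    · nlinarith
    · nlinarith

lemma aux_mul_mem2 {x t l h : ℝ} (hx : x ∈ Icc l h) (ht : t ∈ Icc (0:ℝ) 1) :
    t * x ∈ Icc (min l 0) (max h 0) := by
  obtain ⟨hx1, hx2⟩ := hx; obtain ⟨ht0, ht1⟩ := ht
  constructor
  · rcases le_or_gt 0 x with hs | hs
    · have : (0:ℝ) ≤ t * x := mul_nonneg ht0 hs
      exact le_trans (min_le_right _ _) this
    · have : l ≤ t * x := by nlinarith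
      exact le_trans (min_le_left _ _) this
  · rcases le_or_gt 0 x with hs | hs
    · have : t * x ≤ h := by nlinarith
      exact le_trans this (le_max_left _ _)
    · have : t * x ≤ 0 := by nlinarith
      exact le_trans this (le_max_right _ _)

noncomputable def par (g : ℝ → ℝ) (k : ℕ) (u : ℝ) : ℝ := ∫ t in (0:ℝ)..1, t ^ k * g (t * u)

lemma par_hasDerivAt {a b : ℝ} (ha : a < 0) (hb : 0 < b) {g : ℝ → ℝ}
    (hg : ContDiffOn ℝ (⊤ : ℕ∞) g (Ioo a b)) (k : ℕ) {u : ℝ} (hu : u ∈ Ioo a b) :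
    HasDerivAt (par g k) (par (deriv g) (k + 1) u) u := by
  have hgc : ContinuousOn g (Ioo a b) := hg.continuousOn
  have hg'c : ContinuousOn (deriv g) (Ioo a b) :=
    hg.continuousOn_deriv_of_isOpen isOpen_Ioo one_le_inftop
  -- radius
  set r : ℝ := min (u - a) (b - u) / 2 with hr
  have hrpos : 0 < r := by
    have h1 : 0 < u - a := by linarith [hu.1]
    have h2 : 0 < b - u := by linarith [hu.2]
    have := lt_min h1 h2
    positivity
  have hball : ∀ x ∈ Metric.ball u r, x ∈ Icc (u - r) (u + r) := by
    intro x hx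
    have := Metric.mem_ball.1 hx
    rw [Real.dist_eq, abs_lt] at this
    constructor <;> linarith [this.1, this.2]
  have hIccsub : Icc (u - r) (u + r) ⊆ Ioo a b := by
    intro x hx
    have h1 : r ≤ (u - a) / 2 := by
      rw [hr]; gcongr; exact min_le_left _ _
    have h2 : r ≤ (b - u) / 2 := by
      rw [hr]; gcongr; exact min_le_right _ _
    constructor
    · have := hx.1; have := hu.1; linarith
    · have := hx.2; have := hu.2; linarith
  -- compact set containing all t * x
  set K : Set ℝ := Icc (min (u - r) 0) (max (u + r) 0) with hK
  have hKsub : K ⊆ Ioo a b := by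
    intro y hy
    have e1 : u - r ∈ Ioo a b := hIccsub ⟨le_refl _, by linarith⟩
    have e2 : u + r ∈ Ioo a b := hIccsub ⟨by linarith, le_refl _⟩
    constructor
    · have : a < min (u - r) 0 := lt_min e1.1 ha
      linarith [hy.1]
    · have : max (u + r) 0 < b := max_lt e2.2 hb
      linarith [hy.2]
  have hmemK : ∀ t ∈ Icc (0:ℝ) 1, ∀ x ∈ Metric.ball u r, t * x ∈ K :=
    fun t ht x hx => aux_mul_mem2 (hball x hx) ht
  obtain ⟨C, hC⟩ : ∃ C, ∀ y ∈ K, ‖deriv g y‖ ≤ C :=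
    (isCompact_Icc).exists_bound_of_continuousOn (hg'c.mono hKsub)
  have hC0 : 0 ≤ C := le_trans (norm_nonneg _)
    (hC 0 ⟨min_le_right _ _, le_max_right _ _⟩)
  -- measurability lemma
  have hmeas : ∀ x ∈ Metric.ball u r,
      AEStronglyMeasurable (fun t : ℝ => t ^ k * g (t * x)) (volume.restrict (Ι (0:ℝ) 1)) := by
    intro x hx
    apply ContinuousOn.aestronglyMeasurable _ measurableSet_uIoc
    have hxI : ∀ t ∈ Ι (0:ℝ) 1, t * x ∈ Ioo a b := by
      intro t ht
      rw [uIoc_of_le (by norm_num : (0:ℝ) ≤ 1)] at ht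
      exact aux_mul_mem ha hb (hIccsub (hball x hx)) ⟨ht.1.le, ht.2⟩
    exact (continuousOn_pow k).mul (hgc.comp (continuousOn_id.mul continuousOn_const) hxI)
  have huball : u ∈ Metric.ball u r := Metric.mem_ball_self hrpos
  have key := intervalIntegral.hasDerivAt_integral_of_dominated_loc_of_deriv_le
      (F := fun x t => t ^ k * g (t * x)) (F' := fun x t => t ^ (k + 1) * deriv g (t * x))
      (x₀ := u) (a := (0:ℝ)) (b := 1) (μ := volume) (bound := fun _ => C) (s := Metric.ball u r) (Metric.ball_mem_nhds u hrpos)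
      ?_ ?_ ?_ ?_ ?_ ?_
  · exact key.2
  · exact eventually_of_mem (Metric.ball_mem_nhds u hrpos) hmeas
  · apply ContinuousOn.intervalIntegrable
    have hxI : ∀ t ∈ uIcc (0:ℝ) 1, t * u ∈ Ioo a b := by
      intro t ht
      rw [uIcc_of_le (by norm_num : (0:ℝ) ≤ 1)] at ht
      exact aux_mul_mem ha hb hu ht
    exact (continuousOn_pow k).mul (hgc.comp (continuousOn_id.mul continuousOn_const) hxI)
  · apply ContinuousOn.aestronglyMeasurable _ measurableSet_uIoc
    have hxI : ∀ t ∈ Ι (0:ℝ) 1, t * u ∈ Ioo a b := by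
      intro t ht
      rw [uIoc_of_le (by norm_num : (0:ℝ) ≤ 1)] at ht
      exact aux_mul_mem ha hb hu ⟨ht.1.le, ht.2⟩
    exact (continuousOn_pow (k+1)).mul (hg'c.comp (continuousOn_id.mul continuousOn_const) hxI)
  · -- bound
    filter_upwards with t ht x hx
    rw [uIoc_of_le (by norm_num : (0:ℝ) ≤ 1)] at ht
    have ht' : t ∈ Icc (0:ℝ) 1 := ⟨ht.1.le, ht.2⟩
    have h1 : ‖(t:ℝ) ^ (k+1)‖ ≤ 1 := by
      rw [Real.norm_eq_abs, abs_pow]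
      exact pow_le_one₀ (abs_nonneg t) (by rw [abs_of_nonneg ht'.1]; exact ht'.2)
    have h2 : ‖deriv g (t * x)‖ ≤ C := hC _ (hmemK t ht' x hx)
    calc ‖t ^ (k+1) * deriv g (t * x)‖ = ‖(t:ℝ) ^ (k+1)‖ * ‖deriv g (t * x)‖ := norm_mul _ _
      _ ≤ 1 * C := mul_le_mul h1 h2 (norm_nonneg _) zero_le_one
      _ = C := one_mul C
  · exact intervalIntegrable_const
  · -- differentiability
    filter_upwards with t ht x hx
    rw [uIoc_of_le (by norm_num : (0:ℝ) ≤ 1)] at ht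
    have ht' : t ∈ Icc (0:ℝ) 1 := ⟨ht.1.le, ht.2⟩
    have htx : t * x ∈ Ioo a b := aux_mul_mem ha hb (hIccsub (hball x hx)) ht'
    have hd : HasDerivAt g (deriv g (t * x)) (t * x) :=
      ((hg.contDiffAt (isOpen_Ioo.mem_nhds htx)).differentiableAt inftop_ne_zero).hasDerivAt
    have hmul : HasDerivAt (fun y : ℝ => t * y) t x := by
      simpa using (hasDerivAt_id x).const_mul t
    have := (hd.comp x hmul).const_mul ((t:ℝ) ^ k)
    exact this.congr_deriv (by ring)
lemma par_contDiffOn {a b : ℝ} (ha : a < 0) (hb : 0 < b) (n : ℕ) :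
    ∀ (g : ℝ → ℝ) (k : ℕ), ContDiffOn ℝ (⊤ : ℕ∞) g (Ioo a b) →
      ContDiffOn ℝ n (par g k) (Ioo a b) := by
  induction n with
  | zero =>
    intro g k hg
    rw [show ((0:ℕ) : WithTop ℕ∞) = 0 from rfl, contDiffOn_zero]
    intro u hu
    exact ((par_hasDerivAt ha hb hg k hu).differentiableAt.continuousAt).continuousWithinAt
  | succ n IH =>
    intro g k hg
    rw [show ((n+1:ℕ) : WithTop ℕ∞) = (n : WithTop ℕ∞) + 1 by push_cast; ring,
      contDiffOn_succ_iff_deriv_of_isOpen isOpen_Ioo]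
    refine ⟨fun u hu => (par_hasDerivAt ha hb hg k hu).differentiableAt.differentiableWithinAt,
      ?_, ?_⟩
    · intro h; exact absurd h (by simp)
    · have hg' : ContDiffOn ℝ (⊤ : ℕ∞) (deriv g) (Ioo a b) :=
        hg.deriv_of_isOpen isOpen_Ioo (by simp)
      exact (IH (deriv g) (k+1) hg').congr
        (fun u hu => ((par_hasDerivAt ha hb hg k hu).deriv))

lemma hadamard {a b : ℝ} (ha : a < 0) (hb : 0 < b) {f : ℝ → ℝ}
    (hf : ContDiffOn ℝ (⊤ : ℕ∞) f (Ioo a b)) (hf0 : f 0 = 0) :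
    ∃ m : ℝ → ℝ, ContDiffOn ℝ (⊤ : ℕ∞) m (Ioo a b) ∧ ∀ u ∈ Ioo a b, f u = u * m u := by
  have hf' : ContDiffOn ℝ (⊤ : ℕ∞) (deriv f) (Ioo a b) :=
    hf.deriv_of_isOpen isOpen_Ioo (by simp)
  refine ⟨par (deriv f) 0, ?_, ?_⟩
  · rw [contDiffOn_infty]
    exact fun n => par_contDiffOn ha hb n (deriv f) 0 hf'
  · intro u hu
    have h1 : ∀ t ∈ uIcc (0:ℝ) 1, HasDerivAt (fun t : ℝ => f (t * u)) (deriv f (t * u) * u) t := by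
      intro t ht
      rw [uIcc_of_le (by norm_num : (0:ℝ) ≤ 1)] at ht
      have htu : t * u ∈ Ioo a b := aux_mul_mem ha hb hu ht
      have hd : HasDerivAt f (deriv f (t * u)) (t * u) :=
        ((hf.contDiffAt (isOpen_Ioo.mem_nhds htu)).differentiableAt inftop_ne_zero).hasDerivAt
      have hmul : HasDerivAt (fun t : ℝ => t * u) u t := by
        simpa using (hasDerivAt_id t).mul_const u
      exact hd.comp t hmul
    have h2 : IntervalIntegrable (fun t : ℝ => deriv f (t * u) * u) volume 0 1 := by
      apply ContinuousOn.intervalIntegrable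
      have hxI : ∀ t ∈ uIcc (0:ℝ) 1, t * u ∈ Ioo a b := by
        intro t ht
        rw [uIcc_of_le (by norm_num : (0:ℝ) ≤ 1)] at ht
        exact aux_mul_mem ha hb hu ht
      exact (hf'.continuousOn.comp (continuousOn_id.mul continuousOn_const) hxI).mul continuousOn_const
    have h3 := intervalIntegral.integral_eq_sub_of_hasDerivAt h1 h2
    simp only [one_mul, zero_mul, hf0, sub_zero] at h3
    have h4 : par (deriv f) 0 u = ∫ t in (0:ℝ)..1, deriv f (t * u) := by
      unfold par
      congr 1
      ext t
      simp
    rw [h4]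
    have h5 : (∫ t in (0:ℝ)..1, deriv f (t * u) * u) = (∫ t in (0:ℝ)..1, deriv f (t * u)) * u :=
      intervalIntegral.integral_mul_const u _
    rw [h5] at h3
    rw [mul_comm]
    exact h3.symm
lemma sqrt_mapsTo {c : ℝ} (hc : 0 < c) : MapsTo Real.sqrt (Ico 0 (c^2)) (Ioo (-c) c) := by
  intro s hs
  constructor
  · exact lt_of_lt_of_le (neg_lt_zero.2 hc) (Real.sqrt_nonneg s)
  · exact (Real.sqrt_lt' hc).2 hs.2

lemma deriv_of_even_odd {c : ℝ} {φ : ℝ → ℝ}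
    (hφeven : ∀ u ∈ Ioo (-c) c, φ (-u) = φ u) :
    ∀ u ∈ Ioo (-c) c, deriv φ (-u) = - deriv φ u := by
  intro u hu
  have hev : (fun v => φ (-v)) =ᶠ[𝓝 u] φ := by
    filter_upwards [isOpen_Ioo.eventually_mem hu] with v hv
    exact hφeven v hv
  have h1 : deriv (fun v => φ (-v)) u = deriv φ u := hev.deriv_eq
  rw [deriv_comp_neg] at h1
  linarith

lemma even_sqrt_contDiffOn (n : ℕ) : ∀ {c : ℝ}, 0 < c → ∀ {φ : ℝ → ℝ},
    ContDiffOn ℝ (⊤ : ℕ∞) φ (Ioo (-c) c) → (∀ u ∈ Ioo (-c) c, φ (-u) = φ u) →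
    ContDiffOn ℝ n (fun s => φ (Real.sqrt s)) (Ico 0 (c^2)) := by
  induction n with
  | zero =>
    intro c hc φ hφ hφeven
    rw [show ((0:ℕ) : WithTop ℕ∞) = 0 from rfl, contDiffOn_zero]
    exact hφ.continuousOn.comp Real.continuous_sqrt.continuousOn (sqrt_mapsTo hc)
  | succ n IH =>
    intro c hc φ hφ hφeven
    have hc2 : 0 < c^2 := pow_pos hc 2
    set f := deriv φ with hfdef
    have hf : ContDiffOn ℝ (⊤ : ℕ∞) f (Ioo (-c) c) := hφ.deriv_of_isOpen isOpen_Ioo (by simp)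
    have hfodd : ∀ u ∈ Ioo (-c) c, f (-u) = - f u := deriv_of_even_odd hφeven
    have hf0 : f 0 = 0 := by
      have := hfodd 0 ⟨neg_lt_zero.2 hc, hc⟩
      rw [neg_zero] at this
      linarith
    obtain ⟨m, hm, hfm⟩ := hadamard (neg_lt_zero.2 hc) hc hf hf0
    have hmeven : ∀ u ∈ Ioo (-c) c, m (-u) = m u := by
      intro u hu
      rcases eq_or_ne u 0 with rfl | hu0
    -- u = 0
      · rw [neg_zero]
      · have hnu : -u ∈ Ioo (-c) c := by
          constructor <;> [linarith [hu.2]; linarith [hu.1] ]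
        have e1 : f (-u) = (-u) * m (-u) := hfm (-u) hnu
        have e2 : f u = u * m u := hfm u hu
        have e3 : f (-u) = - f u := hfodd u hu
        have : (-u) * m (-u) = (-u) * m u := by rw [← e1, e3, e2]; ring
        exact mul_left_cancel₀ (neg_ne_zero.2 hu0) this
    set φ' : ℝ → ℝ := fun u => m u / 2 with hφ'def
    have hφ's : ContDiffOn ℝ (⊤ : ℕ∞) φ' (Ioo (-c) c) := hm.div_const 2
    have hφ'even : ∀ u ∈ Ioo (-c) c, φ' (-u) = φ' u := by
      intro u hu; simp only [hφ'def, hmeven u hu]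
    set g : ℝ → ℝ := fun s => φ (Real.sqrt s) with hgdef
    -- derivative of g at interior points
    have hgd : ∀ s ∈ Ioo 0 (c^2), HasDerivAt g (φ' (Real.sqrt s)) s := by
      intro s hs
      have hs0 : (0:ℝ) < s := hs.1
      have hsq : Real.sqrt s ∈ Ioo (-c) c := sqrt_mapsTo hc ⟨hs0.le, hs.2⟩
      have hsqpos : 0 < Real.sqrt s := Real.sqrt_pos.2 hs0
      have h1 : HasDerivAt φ (f (Real.sqrt s)) (Real.sqrt s) :=
        ((hφ.contDiffAt (isOpen_Ioo.mem_nhds hsq)).differentiableAt inftop_ne_zero).hasDerivAt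
      have h2 : HasDerivAt Real.sqrt (1 / (2 * Real.sqrt s)) s := Real.hasDerivAt_sqrt hs0.ne'
      have h3 := h1.comp s h2
      have h4 : f (Real.sqrt s) * (1 / (2 * Real.sqrt s)) = φ' (Real.sqrt s) := by
        rw [hfm _ hsq, hφ'def]
        field_simp
      rw [h4] at h3
      exact h3
    -- continuity of g on Ico
    have hgc : ContinuousOn g (Ico 0 (c^2)) :=
      hφ.continuousOn.comp Real.continuous_sqrt.continuousOn (sqrt_mapsTo hc)
    -- one-sided derivative at 0
    have hmc : ContinuousAt m 0 :=
      (hm.contDiffAt (isOpen_Ioo.mem_nhds ⟨neg_lt_zero.2 hc, hc⟩)).continuousAt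
    have hφ'c : ContinuousAt φ' 0 := hmc.div_const 2
    have h0 : HasDerivWithinAt g (φ' 0) (Ici 0) 0 := by
      apply hasDerivWithinAt_Ici_of_tendsto_deriv (s := Ioo 0 (c^2))
      · exact fun s hs => (hgd s hs).differentiableAt.differentiableWithinAt
      · exact (hgc.continuousWithinAt ⟨le_refl 0, hc2⟩).mono Ioo_subset_Ico_self
      · exact Ioo_mem_nhdsGT_of_mem ⟨le_refl 0, hc2⟩
      · have hT : Tendsto (fun s => φ' (Real.sqrt s)) (𝓝[>] (0:ℝ)) (𝓝 (φ' 0)) := by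
          have hsq : Tendsto Real.sqrt (𝓝[>] (0:ℝ)) (𝓝 0) := by
            have := (Real.continuous_sqrt.tendsto 0).mono_left (nhdsWithin_le_nhds (s := Ioi 0))
            rwa [Real.sqrt_zero] at this
          exact hφ'c.tendsto.comp hsq
        apply hT.congr'
        filter_upwards [Ioo_mem_nhdsGT_of_mem (⟨le_refl 0, hc2⟩ : (0:ℝ) ∈ Ico 0 (c^2))] with s hs
        exact ((hgd s hs).deriv).symm
    -- differentiability on Ico
    have hdiff : DifferentiableOn ℝ g (Ico 0 (c^2)) := by
      intro s hs
      rcases eq_or_lt_of_le hs.1 with rfl | hs0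
      · exact (h0.mono Ico_subset_Ici_self).differentiableWithinAt
      · exact (hgd s ⟨hs0, hs.2⟩).differentiableAt.differentiableWithinAt
    -- derivWithin computation
    have hdw : EqOn (derivWithin g (Ico 0 (c^2))) (fun s => φ' (Real.sqrt s)) (Ico 0 (c^2)) := by
      intro s hs
      rcases eq_or_lt_of_le hs.1 with rfl | hs0
      · have : derivWithin g (Ico 0 (c^2)) 0 = φ' 0 :=
          (h0.mono Ico_subset_Ici_self).derivWithin (uniqueDiffOn_Ico 0 (c^2) 0 ⟨le_refl 0, hc2⟩)
        rw [this]
        simp [Real.sqrt_zero]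
      · have hnhds : Ico 0 (c^2) ∈ 𝓝 s :=
          Filter.mem_of_superset (isOpen_Ioo.mem_nhds ⟨hs0, hs.2⟩) Ioo_subset_Ico_self
        rw [derivWithin_of_mem_nhds hnhds, (hgd s ⟨hs0, hs.2⟩).deriv]
    -- conclude
    rw [show ((n+1:ℕ) : WithTop ℕ∞) = (n : WithTop ℕ∞) + 1 by push_cast; ring,
      contDiffOn_succ_iff_derivWithin (uniqueDiffOn_Ico 0 (c^2))]
    refine ⟨hdiff, ?_, ?_⟩
    · intro h; exact absurd h (by simp)
    · exact (IH hc hφ's hφ'even).congr hdw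

lemma even_sqrt_contDiffOn_top {c : ℝ} (hc : 0 < c) {φ : ℝ → ℝ}
    (hφ : ContDiffOn ℝ (⊤ : ℕ∞) φ (Ioo (-c) c)) (hφeven : ∀ u ∈ Ioo (-c) c, φ (-u) = φ u) :
    ContDiffOn ℝ (⊤ : ℕ∞) (fun s => φ (Real.sqrt s)) (Ico 0 (c^2)) := by
  rw [show ((⊤:ℕ∞) : WithTop ℕ∞) = ((⊤ : ℕ∞) : WithTop ℕ∞) from rfl, contDiffOn_infty]
  exact fun n => even_sqrt_contDiffOn n hc hφ hφeven
theorem main_pos (δ ε : ℝ) (hδ : 0 < δ) (hε : 0 < ε)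
    (τ ψ : ℝ → ℝ)
    (hτ : ContDiffOn ℝ (⊤ : ℕ∞) τ (Ioo (-δ) ε))
    (hψ : ContDiffOn ℝ (⊤ : ℕ∞) ψ (Ioo (-δ) ε))
    (h0 : deriv τ 0 = 0) (hpos : 0 < deriv (deriv τ) 0)
    (hne : ∀ t ∈ Ioo (-δ) 0 ∪ Ioo 0 ε, deriv τ t * deriv (deriv τ) t ≠ 0)
    (I : Set ℝ)
    (hI1 : τ '' Ioo (-δ) 0 = I) (hI2 : τ '' Ioo 0 ε = I)
    (G : ℝ → ℝ)
    (hG : ∀ t ∈ Ioo (-δ) 0 ∪ Ioo 0 ε, ψ t = G (τ t)) :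
    ∃ Gext : ℝ → ℝ, ContDiffOn ℝ (⊤ : ℕ∞) Gext (I ∪ {τ 0}) ∧ EqOn Gext G I := by
  have hδ' : -δ < 0 := neg_lt_zero.2 hδ
  have hJ : (0:ℝ) ∈ Ioo (-δ) ε := ⟨hδ', hε⟩
  have hτ' : ContDiffOn ℝ (⊤ : ℕ∞) (deriv τ) (Ioo (-δ) ε) :=
    hτ.deriv_of_isOpen isOpen_Ioo (by simp)
  have hcont' : ContinuousOn (deriv τ) (Ioo (-δ) ε) := hτ'.continuousOn
  have hD : HasDerivAt (deriv τ) (deriv (deriv τ) 0) 0 :=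
    ((hτ'.contDiffAt (isOpen_Ioo.mem_nhds hJ)).differentiableAt inftop_ne_zero).hasDerivAt
  have hslope : ∀ᶠ t in 𝓝[≠] (0:ℝ), 0 < deriv τ t / t := by
    have h1 := hasDerivAt_iff_tendsto_slope.1 hD
    have h2 := h1.eventually (eventually_gt_nhds hpos)
    filter_upwards [h2] with t ht
    rwa [slope_def_field, h0, sub_zero, sub_zero] at ht
  -- positive derivative on the right
  have hpos' : ∀ t ∈ Ioo 0 ε, 0 < deriv τ t := by
    have hex : ∃ t ∈ Ioo 0 ε, 0 < deriv τ t := by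
      have h3 : Ioo (0:ℝ) ε ∈ 𝓝[>] (0:ℝ) := Ioo_mem_nhdsGT hε
      have h4 : 𝓝[>] (0:ℝ) ≤ 𝓝[≠] (0:ℝ) := nhdsWithin_mono 0 (fun x hx => ne_of_gt hx)
      obtain ⟨t, ht1, ht2⟩ := ((hslope.filter_mono h4).and h3).exists
      refine ⟨t, ht2, ?_⟩
      rcases div_pos_iff.1 ht1 with ⟨h, _⟩ | ⟨_, h⟩
      · exact h
      · exact absurd ht2.1 (not_lt.2 h.le)
    intro t ht
    obtain ⟨tp, htp, hdtp⟩ := hex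
    rcases lt_trichotomy (deriv τ t) 0 with hlt | heq | hgt
    · exfalso
      have hsub : uIcc t tp ⊆ Ioo 0 ε := (ordConnected_Ioo).uIcc_subset ht htp
      have hsub2 : uIcc t tp ⊆ Ioo (-δ) ε :=
        hsub.trans (Ioo_subset_Ioo hδ'.le le_rfl)
      have h0m : (0:ℝ) ∈ uIcc (deriv τ t) (deriv τ tp) := by
        rw [mem_uIcc]; left; exact ⟨hlt.le, hdtp.le⟩
      obtain ⟨z, hz, hz0⟩ := intermediate_value_uIcc (hcont'.mono hsub2) h0m
      exact hne z (Or.inr (hsub hz)) (by rw [hz0]; ring)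
    · exact absurd (by rw [heq]; ring) (hne t (Or.inr ht))
    · exact hgt
  -- negative derivative on the left
  have hneg' : ∀ t ∈ Ioo (-δ) 0, deriv τ t < 0 := by
    have hex : ∃ t ∈ Ioo (-δ) 0, deriv τ t < 0 := by
      have h3 : Ioo (-δ) (0:ℝ) ∈ 𝓝[<] (0:ℝ) := Ioo_mem_nhdsLT hδ'
      have h4 : 𝓝[<] (0:ℝ) ≤ 𝓝[≠] (0:ℝ) := nhdsWithin_mono 0 (fun x hx => ne_of_lt hx)
      obtain ⟨t, ht1, ht2⟩ := ((hslope.filter_mono h4).and h3).exists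
      refine ⟨t, ht2, ?_⟩
      rcases div_pos_iff.1 ht1 with ⟨_, h⟩ | ⟨h, _⟩
      · exact absurd ht2.2 (not_lt.2 h.le)
      · exact h
    intro t ht
    obtain ⟨tm, htm, hdtm⟩ := hex
    rcases lt_trichotomy (deriv τ t) 0 with hlt | heq | hgt
    · exact hlt
    · exact absurd (by rw [heq]; ring) (hne t (Or.inl ht))
    · exfalso
      have hsub : uIcc t tm ⊆ Ioo (-δ) 0 := (ordConnected_Ioo).uIcc_subset ht htm
      have hsub2 : uIcc t tm ⊆ Ioo (-δ) ε :=
        hsub.trans (Ioo_subset_Ioo le_rfl hε.le)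
      have h0m : (0:ℝ) ∈ uIcc (deriv τ t) (deriv τ tm) := by
        rw [mem_uIcc]; right; exact ⟨hdtm.le, hgt.le⟩
      obtain ⟨z, hz, hz0⟩ := intermediate_value_uIcc (hcont'.mono hsub2) h0m
      exact hne z (Or.inl (hsub hz)) (by rw [hz0]; ring)
  -- monotonicity
  have monτ : StrictMonoOn τ (Ico 0 ε) :=
    strictMonoOn_of_deriv_pos (convex_Ico 0 ε)
      (hτ.continuousOn.mono (fun x hx => ⟨lt_of_lt_of_le hδ' hx.1, hx.2⟩))
      (fun t ht => hpos' t (by rwa [interior_Ico] at ht))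
  have antτ : StrictAntiOn τ (Ioc (-δ) 0) :=
    strictAntiOn_of_deriv_neg (convex_Ioc (-δ) 0)
      (hτ.continuousOn.mono (fun x hx => ⟨hx.1, lt_of_le_of_lt hx.2 hε⟩))
      (fun t ht => hneg' t (by rwa [interior_Ioc] at ht))
  have τgt : ∀ t ∈ Ioo (-δ) ε, t ≠ 0 → τ 0 < τ t := by
    intro t ht htne
    rcases lt_or_gt_of_ne htne with h | h
    · exact antτ ⟨ht.1, h.le⟩ ⟨hδ', le_refl 0⟩ h
    · exact monτ ⟨le_refl 0, hε⟩ ⟨h.le, ht.2⟩ h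
  -- Hadamard twice
  obtain ⟨m₁, hm₁, hfm₁⟩ := hadamard hδ' hε (hτ.sub contDiffOn_const) (sub_self (τ 0))
  have hm₁d : DifferentiableAt ℝ m₁ 0 :=
    (hm₁.contDiffAt (isOpen_Ioo.mem_nhds hJ)).differentiableAt inftop_ne_zero
  have hm₁0 : m₁ 0 = 0 := by
    have hev₁ : (fun t => τ t - τ 0) =ᶠ[𝓝 0] (fun t => t * m₁ t) := by
      filter_upwards [isOpen_Ioo.eventually_mem hJ] with t ht using hfm₁ t ht
    have hder₁ : deriv (fun t => τ t - τ 0) 0 = deriv (fun t => t * m₁ t) 0 := hev₁.deriv_eq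
    rw [deriv_sub_const, h0, deriv_fun_mul differentiableAt_fun_id hm₁d] at hder₁
    simpa using hder₁.symm
  obtain ⟨m₂, hm₂, hm₁₂⟩ := hadamard hδ' hε hm₁ hm₁0
  have key : ∀ t ∈ Ioo (-δ) ε, τ t - τ 0 = t ^ 2 * m₂ t := by
    intro t ht; rw [hfm₁ t ht, hm₁₂ t ht]; ring
  have hm₂d : ∀ t ∈ Ioo (-δ) ε, DifferentiableAt ℝ m₂ t :=
    fun t ht => (hm₂.contDiffAt (isOpen_Ioo.mem_nhds ht)).differentiableAt inftop_ne_zero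
  have hm₂' : ContDiffOn ℝ (⊤ : ℕ∞) (deriv m₂) (Ioo (-δ) ε) :=
    hm₂.deriv_of_isOpen isOpen_Ioo (by simp)
  have hm₂'d : DifferentiableAt ℝ (deriv m₂) 0 :=
    (hm₂'.contDiffAt (isOpen_Ioo.mem_nhds hJ)).differentiableAt inftop_ne_zero
  -- second derivative at 0
  have hm₂0 : deriv (deriv τ) 0 = 2 * m₂ 0 := by
    have hderiv_eq : ∀ t ∈ Ioo (-δ) ε, deriv τ t = 2 * t * m₂ t + t ^ 2 * deriv m₂ t := by
      intro t ht
      have hev : τ =ᶠ[𝓝 t] (fun v => τ 0 + v ^ 2 * m₂ v) := by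
        filter_upwards [isOpen_Ioo.eventually_mem ht] with v hv
        have := key v hv; linarith
      rw [hev.deriv_eq, deriv_const_add, deriv_fun_mul (differentiableAt_pow 2) (hm₂d t ht)]
      simp [deriv_pow]
      try ring
    have hev2 : deriv τ =ᶠ[𝓝 0] (fun t => 2 * t * m₂ t + t ^ 2 * deriv m₂ t) := by
      filter_upwards [isOpen_Ioo.eventually_mem hJ] with v hv using hderiv_eq v hv
    have e := hev2.deriv_eq
    have d1 : HasDerivAt (fun t : ℝ => 2 * t * m₂ t) (2 * m₂ 0) 0 := by
      have hfun : (fun t : ℝ => 2 * t * m₂ t) = (fun t : ℝ => 2 * (t * m₂ t)) := by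
        funext t; ring
      rw [hfun]
      have h := ((hasDerivAt_id (0:ℝ)).mul (hm₂d 0 hJ).hasDerivAt).const_mul 2
      exact h.congr_deriv (by simp)
    have d2 : HasDerivAt (fun t : ℝ => t ^ 2 * deriv m₂ t) 0 0 := by
      have h := (hasDerivAt_pow 2 (0:ℝ)).mul hm₂'d.hasDerivAt
      exact h.congr_deriv (by simp)
    have hsum := d1.add d2
    rw [e, show (fun t => 2 * t * m₂ t + t ^ 2 * deriv m₂ t) = (fun t => 2 * t * m₂ t) + (fun t => t ^ 2 * deriv m₂ t) from rfl, hsum.deriv]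
    ring
  have hm₂pos : ∀ t ∈ Ioo (-δ) ε, 0 < m₂ t := by
    intro t ht
    rcases eq_or_ne t 0 with rfl | htne
    · linarith [hm₂0]
    · have h1 : 0 < τ t - τ 0 := sub_pos.2 (τgt t ht htne)
      rw [key t ht] at h1
      have ht2 : 0 < t ^ 2 := by positivity
      nlinarith
  -- the square root change of variables
  set σ : ℝ → ℝ := fun t => t * Real.sqrt (m₂ t) with hσdef
  have hσ : ContDiffOn ℝ (⊤ : ℕ∞) σ (Ioo (-δ) ε) :=
    contDiffOn_id.mul (hm₂.sqrt (fun t ht => (hm₂pos t ht).ne'))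
  have hσ0 : σ 0 = 0 := zero_mul _
  have hsqσ : ∀ t ∈ Ioo (-δ) ε, σ t ^ 2 = τ t - τ 0 := by
    intro t ht
    simp only [hσdef]
    rw [mul_pow, Real.sq_sqrt (hm₂pos t ht).le]
    exact (key t ht).symm
  have hσpos : ∀ t ∈ Ioo (-δ) ε, 0 < t → 0 < σ t :=
    fun t ht h => mul_pos h (Real.sqrt_pos.2 (hm₂pos t ht))
  have hσneg : ∀ t ∈ Ioo (-δ) ε, t < 0 → σ t < 0 :=
    fun t ht h => mul_neg_of_neg_of_pos h (Real.sqrt_pos.2 (hm₂pos t ht))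
  have hσplus : ∀ t ∈ Ioo (-δ) ε, 0 ≤ t → σ t = Real.sqrt (τ t - τ 0) := by
    intro t ht h
    have h1 : 0 ≤ σ t := mul_nonneg h (Real.sqrt_nonneg _)
    rw [← hsqσ t ht, Real.sqrt_sq h1]
  have hσminus : ∀ t ∈ Ioo (-δ) ε, t < 0 → σ t = - Real.sqrt (τ t - τ 0) := by
    intro t ht h
    rw [← hsqσ t ht, Real.sqrt_sq_eq_abs, abs_of_neg (hσneg t ht h), neg_neg]
  have hσd : ∀ t ∈ Ioo (-δ) ε, DifferentiableAt ℝ σ t :=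
    fun t ht => (hσ.contDiffAt (isOpen_Ioo.mem_nhds ht)).differentiableAt inftop_ne_zero
  have hσ'0 : deriv σ 0 = Real.sqrt (m₂ 0) := by
    have hsqd : DifferentiableAt ℝ (fun t => Real.sqrt (m₂ t)) 0 :=
      (((hm₂.sqrt (fun t ht => (hm₂pos t ht).ne')).contDiffAt
        (isOpen_Ioo.mem_nhds hJ)).differentiableAt inftop_ne_zero)
    simp only [hσdef]
    rw [deriv_fun_mul differentiableAt_fun_id hsqd]
    simp
  have hσ'ne : ∀ t ∈ Ioo (-δ) ε, deriv σ t ≠ 0 := by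
    intro t ht
    rcases eq_or_ne t 0 with rfl | htne
    · rw [hσ'0]; exact (Real.sqrt_pos.2 (hm₂pos 0 hJ)).ne'
    · have hmem : t ∈ Ioo (-δ) 0 ∪ Ioo 0 ε := by
        rcases lt_or_gt_of_ne htne with h | h
        · exact Or.inl ⟨ht.1, h⟩
        · exact Or.inr ⟨h, ht.2⟩
      have hτ'ne : deriv τ t ≠ 0 := left_ne_zero_of_mul (hne t hmem)
      have hev : (fun v => σ v ^ 2) =ᶠ[𝓝 t] (fun v => τ v - τ 0) := by
        filter_upwards [isOpen_Ioo.eventually_mem ht] with v hv using hsqσ v hv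
      have e1 : deriv (fun v => σ v ^ 2) t = deriv (fun v => τ v - τ 0) t := hev.deriv_eq
      have e2 : deriv (fun v => σ v ^ 2) t = 2 * σ t * deriv σ t := by
        have h := ((hσd t ht).hasDerivAt.pow 2)
        rw [show (fun v => σ v ^ 2) = σ ^ 2 from rfl, h.deriv]
        push_cast
        try ring
      rw [deriv_sub_const] at e1
      intro hcontra
      apply hτ'ne
      rw [← e1, e2, hcontra, mul_zero]
  have hσ'pos : ∀ t ∈ Ioo (-δ) ε, 0 < deriv σ t := by
    intro t ht
    rcases lt_trichotomy (deriv σ t) 0 with hlt | heq | hgt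
    · exfalso
      have hcσ' : ContinuousOn (deriv σ) (Ioo (-δ) ε) :=
        (hσ.deriv_of_isOpen isOpen_Ioo inftop_add_one_le).continuousOn
      have hsub : uIcc t 0 ⊆ Ioo (-δ) ε := (ordConnected_Ioo).uIcc_subset ht hJ
      have h0m : (0:ℝ) ∈ uIcc (deriv σ t) (deriv σ 0) := by
        rw [mem_uIcc]; left
        exact ⟨hlt.le, by rw [hσ'0]; exact Real.sqrt_nonneg _⟩
      obtain ⟨z, hz, hz0⟩ := intermediate_value_uIcc (hcσ'.mono hsub) h0m
      exact hσ'ne z (hsub hz) hz0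
    · exact absurd heq (hσ'ne t ht)
    · exact hgt
  have monσ : StrictMonoOn σ (Ioo (-δ) ε) :=
    strictMonoOn_of_deriv_pos (convex_Ioo (-δ) ε) hσ.continuousOn
      (fun t ht => hσ'pos t (by rwa [interior_Ioo] at ht))
  have hinv : ∀ t ∈ Ioo (-δ) ε, Function.invFunOn σ (Ioo (-δ) ε) (σ t) = t :=
    fun t ht => (monσ.injOn).leftInvOn_invFunOn ht
  set φ : ℝ → ℝ := fun u => ψ (Function.invFunOn σ (Ioo (-δ) ε) u) with hφdef
  have hφσ : ∀ t ∈ Ioo (-δ) ε, φ (σ t) = ψ t := by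
    intro t ht
    simp only [hφdef]
    rw [hinv t ht]
  -- φ is smooth at every point of the image of σ
  have hφat : ∀ t ∈ Ioo (-δ) ε, ContDiffAt ℝ (⊤ : ℕ∞) φ (σ t) := by
    intro t ht
    have hd : deriv σ t ≠ 0 := (hσ'pos t ht).ne'
    have hσt : ContDiffAt ℝ (⊤ : ℕ∞) σ t := hσ.contDiffAt (isOpen_Ioo.mem_nhds ht)
    set A : ℝ ≃L[ℝ] ℝ := ContinuousLinearEquiv.unitsEquivAut ℝ (Units.mk0 _ hd) with hA
    have hA' : HasFDerivAt σ (A : ℝ →L[ℝ] ℝ) t := by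
      have h1 := (hσd t ht).hasDerivAt
      rw [hasDerivAt_iff_hasFDerivAt] at h1
      have hAe : (A : ℝ →L[ℝ] ℝ) = ContinuousLinearMap.toSpanSingleton ℝ (deriv σ t) := by
        ext; simp [hA]
      rw [hAe]; exact h1
    set inv := hσt.localInverse hA' inftop_ne_zero with hinvdef
    have hinv_cd : ContDiffAt ℝ (⊤ : ℕ∞) inv (σ t) := hσt.to_localInverse hA' inftop_ne_zero
    have hinv_t : inv (σ t) = t := hσt.localInverse_apply_image hA' inftop_ne_zero
    have hre : ∀ᶠ v in 𝓝 (σ t), σ (inv v) = v :=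
      (hσt.hasStrictFDerivAt' hA' inftop_ne_zero).eventually_right_inverse
    have hmemJ : ∀ᶠ v in 𝓝 (σ t), inv v ∈ Ioo (-δ) ε := by
      apply hinv_cd.continuousAt.eventually_mem
      rw [hinv_t]
      exact isOpen_Ioo.mem_nhds ht
    have heq : φ =ᶠ[𝓝 (σ t)] fun v => ψ (inv v) := by
      filter_upwards [hre, hmemJ] with v h1 h2
      simp only [hφdef]
      have h3 : Function.invFunOn σ (Ioo (-δ) ε) v = inv v := by
        conv_lhs => rw [← h1]
        exact hinv _ h2
      rw [h3]
    have hψat : ContDiffAt ℝ (⊤ : ℕ∞) ψ (inv (σ t)) := by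
      rw [hinv_t]; exact hψ.contDiffAt (isOpen_Ioo.mem_nhds ht)
    exact ((hψat.comp _ hinv_cd).congr_of_eventuallyEq heq)
  -- interval inside I
  have hIooI : ∀ t₁ ∈ Ioo 0 ε, Ioo (τ 0) (τ t₁) ⊆ I := by
    intro t₁ ht₁
    have hc : ContinuousOn τ (Icc 0 t₁) := hτ.continuousOn.mono
      (fun x hx => ⟨lt_of_lt_of_le hδ' hx.1, lt_of_le_of_lt hx.2 ht₁.2⟩)
    intro s hs
    obtain ⟨z, hz, hzs⟩ := intermediate_value_Ioo (le_of_lt ht₁.1) hc hs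
    rw [← hI2]
    exact ⟨z, ⟨hz.1, lt_trans hz.2 ht₁.2⟩, hzs⟩
  -- symmetric pairs
  have hpair : ∀ t₁ ∈ Ioo 0 ε, ∀ u, 0 < u → u < σ t₁ →
      ∃ tp ∈ Ioo 0 ε, σ tp = u ∧ ∃ tm ∈ Ioo (-δ) 0, σ tm = -u ∧ ψ tp = ψ tm := by
    intro t₁ ht₁ u hu0 hu1
    have ht₁J : t₁ ∈ Ioo (-δ) ε := ⟨lt_trans hδ' ht₁.1, ht₁.2⟩
    have hsq1 := hsqσ t₁ ht₁J
    have hs : τ 0 + u ^ 2 ∈ Ioo (τ 0) (τ t₁) := by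
      constructor
      · nlinarith
      · have h2 : u ^ 2 < σ t₁ ^ 2 := by nlinarith
        nlinarith
    have hsI : τ 0 + u ^ 2 ∈ I := hIooI t₁ ht₁ hs
    obtain ⟨tp, htp, htps⟩ : τ 0 + u ^ 2 ∈ τ '' Ioo 0 ε := by rw [hI2]; exact hsI
    obtain ⟨tm, htm, htms⟩ : τ 0 + u ^ 2 ∈ τ '' Ioo (-δ) 0 := by rw [hI1]; exact hsI
    have htpJ : tp ∈ Ioo (-δ) ε := ⟨lt_trans hδ' htp.1, htp.2⟩
    have htmJ : tm ∈ Ioo (-δ) ε := ⟨htm.1, lt_trans htm.2 hε⟩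
    have hσp : σ tp = u := by
      rw [hσplus tp htpJ htp.1.le, htps, add_sub_cancel_left, Real.sqrt_sq hu0.le]
    have hσm : σ tm = -u := by
      rw [hσminus tm htmJ htm.2, htms, add_sub_cancel_left, Real.sqrt_sq hu0.le]
    have hψeq : ψ tp = ψ tm := by
      rw [hG tp (Or.inr htp), hG tm (Or.inl htm), htps, htms]
    exact ⟨tp, htp, hσp, tm, htm, hσm, hψeq⟩
  -- φ is smooth and even on (-σ t₁, σ t₁)
  have hφprops : ∀ t₁ ∈ Ioo 0 ε,
      ContDiffOn ℝ (⊤ : ℕ∞) φ (Ioo (-(σ t₁)) (σ t₁)) ∧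
      ∀ u ∈ Ioo (-(σ t₁)) (σ t₁), φ (-u) = φ u := by
    intro t₁ ht₁
    have hmain : ∀ u, 0 < u → u < σ t₁ →
        φ (-u) = φ u ∧ ContDiffAt ℝ (⊤ : ℕ∞) φ u ∧ ContDiffAt ℝ (⊤ : ℕ∞) φ (-u) := by
      intro u h1 h2
      obtain ⟨tp, htp, hσp, tm, htm, hσm, hψeq⟩ := hpair t₁ ht₁ u h1 h2
      have htpJ : tp ∈ Ioo (-δ) ε := ⟨lt_trans hδ' htp.1, htp.2⟩
      have htmJ : tm ∈ Ioo (-δ) ε := ⟨htm.1, lt_trans htm.2 hε⟩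
      refine ⟨?_, ?_, ?_⟩
      · rw [← hσm, ← hσp, hφσ tm htmJ, hφσ tp htpJ]
        exact hψeq.symm
      · rw [← hσp]; exact hφat tp htpJ
      · rw [← hσm]; exact hφat tm htmJ
    constructor
    · intro u hu
      rcases lt_trichotomy u 0 with h | h | h
      · have h2 := (hmain (-u) (by linarith) (by linarith [hu.1])).2.2
        rw [neg_neg] at h2
        exact h2.contDiffWithinAt
      · rw [h]
        have h2 : ContDiffAt ℝ (⊤ : ℕ∞) φ (σ 0) := hφat 0 hJ
        rw [hσ0] at h2
        exact h2.contDiffWithinAt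
      · exact ((hmain u h hu.2).2.1).contDiffWithinAt
    · intro u hu
      rcases lt_trichotomy u 0 with h | h | h
      · have h2 := (hmain (-u) (by linarith) (by linarith [hu.1])).1
        rw [neg_neg] at h2
        exact h2.symm
      · rw [h, neg_zero]
      · exact (hmain u h hu.2).1
  -- the extension
  set Gext : ℝ → ℝ := fun s => φ (Real.sqrt (s - τ 0)) with hGdef
  have hGI : EqOn Gext G I := by
    intro s hs
    obtain ⟨t, ht, hts⟩ : s ∈ τ '' Ioo 0 ε := by rw [hI2]; exact hs
    have htJ : t ∈ Ioo (-δ) ε := ⟨lt_trans hδ' ht.1, ht.2⟩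
    simp only [hGdef]
    rw [← hts, ← hσplus t htJ ht.1.le, hφσ t htJ, ← hG t (Or.inr ht)]
  have hIgt : ∀ s ∈ I, τ 0 < s := by
    intro s hs
    obtain ⟨t, ht, hts⟩ : s ∈ τ '' Ioo 0 ε := by rw [hI2]; exact hs
    rw [← hts]
    exact τgt t ⟨lt_trans hδ' ht.1, ht.2⟩ (ne_of_gt ht.1)
  refine ⟨Gext, ?_, hGI⟩
  intro s₀ hs₀
  obtain ⟨t₁, ht₁, hlt⟩ : ∃ t₁ ∈ Ioo 0 ε, s₀ < τ t₁ := by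
    rcases hs₀ with hs₀ | hs₀
    · obtain ⟨t, ht, hts⟩ : s₀ ∈ τ '' Ioo 0 ε := by rw [hI2]; exact hs₀
      refine ⟨(t + ε)/2, ⟨by linarith [ht.1, ht.2], by linarith [ht.2]⟩, ?_⟩
      rw [← hts]
      exact monτ ⟨ht.1.le, ht.2⟩ ⟨by linarith [ht.1], by linarith [ht.2]⟩ (by linarith [ht.2])
    · rw [mem_singleton_iff] at hs₀
      refine ⟨ε/2, ⟨by linarith, by linarith⟩, ?_⟩
      rw [hs₀]
      exact monτ ⟨le_refl 0, hε⟩ ⟨by linarith, by linarith⟩ (by linarith)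
  have hge : τ 0 ≤ s₀ := by
    rcases hs₀ with h | h
    · exact (hIgt s₀ h).le
    · rw [mem_singleton_iff] at h
      rw [h]
  have ht₁J : t₁ ∈ Ioo (-δ) ε := ⟨lt_trans hδ' ht₁.1, ht₁.2⟩
  have hu₁ : 0 < σ t₁ := hσpos t₁ ht₁J ht₁.1
  obtain ⟨hφs, hφe⟩ := hφprops t₁ ht₁
  have hsq : ContDiffOn ℝ (⊤ : ℕ∞) (fun s => φ (Real.sqrt s)) (Ico 0 (σ t₁ ^ 2)) :=
    even_sqrt_contDiffOn_top hu₁ hφs hφe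
  have hIco : ContDiffOn ℝ (⊤ : ℕ∞) Gext (Ico (τ 0) (τ t₁)) := by
    have hsq1 := hsqσ t₁ ht₁J
    have hmap : (Ico (τ 0) (τ t₁)) ⊆ (fun s => s - τ 0) ⁻¹' (Ico 0 (σ t₁ ^ 2)) := by
      intro s hs
      constructor
      · simp only [mem_preimage]; linarith [hs.1]
      · have := hs.2; simp only [mem_preimage]; linarith
    have := hsq.comp ((contDiff_id.sub contDiff_const).contDiffOn) hmap
    exact this
  have hmem : Ico (τ 0) (τ t₁) ∈ 𝓝[I ∪ {τ 0}] s₀ := by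
    apply Filter.mem_of_superset (inter_mem self_mem_nhdsWithin
      (mem_nhdsWithin_of_mem_nhds (Iio_mem_nhds hlt)))
    rintro s ⟨hs1, hs2⟩
    rcases hs1 with h | h
    · exact ⟨(hIgt s h).le, hs2⟩
    · rw [mem_singleton_iff] at h
      rw [h]
      exact ⟨le_refl _, h ▸ hs2⟩
  exact (hIco s₀ ⟨hge, hlt⟩).mono_of_mem_nhdsWithin hmem

/-- Lemma 1 of the paper. Let `δ, ε > 0` and let
`τ, ψ : (−δ, ε) → ℝ` be `C^∞` functions such that
(a) `τ'(0) = 0 ≠ τ''(0)` and `τ'·τ'' ≠ 0` everywhere on `(−δ,0) ∪ (0,ε)`;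
(b) the restrictions of `τ` to `(−δ,0)` and `(0,ε)` have the same range `I`;
(c) `ψ(t) = G(τ(t))` for some `G : I → ℝ` and all `t ∈ (−δ,0) ∪ (0,ε)`.
Then `G` admits a `C^∞` extension to the half-open interval `I ∪ {τ 0}`. -/
theorem stmt_0 (δ ε : ℝ) (hδ : 0 < δ) (hε : 0 < ε)
    (τ ψ : ℝ → ℝ)
    (hτ : ContDiffOn ℝ (⊤ : ℕ∞) τ (Ioo (-δ) ε))
    (hψ : ContDiffOn ℝ (⊤ : ℕ∞) ψ (Ioo (-δ) ε))
    (h0 : deriv τ 0 = 0) (h0' : deriv (deriv τ) 0 ≠ 0)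
    (hne : ∀ t ∈ Ioo (-δ) 0 ∪ Ioo 0 ε, deriv τ t * deriv (deriv τ) t ≠ 0)
    (I : Set ℝ)
    (hI1 : τ '' Ioo (-δ) 0 = I) (hI2 : τ '' Ioo 0 ε = I)
    (G : ℝ → ℝ)
    (hG : ∀ t ∈ Ioo (-δ) 0 ∪ Ioo 0 ε, ψ t = G (τ t)) :
    ∃ Gext : ℝ → ℝ, ContDiffOn ℝ (⊤ : ℕ∞) Gext (I ∪ {τ 0}) ∧ EqOn Gext G I := by
  rcases h0'.lt_or_gt with hneg | hpos
  · -- negative second derivative: apply the positive case to -τ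
    set τ' : ℝ → ℝ := fun t => -τ t with hτ'def
    have hd1 : deriv τ' = fun t => -deriv τ t := by
      funext t
      simp only [hτ'def]
      exact deriv.neg
    have hτ's : ContDiffOn ℝ (⊤ : ℕ∞) τ' (Ioo (-δ) ε) := hτ.neg
    have hd0 : deriv τ' 0 = 0 := by rw [hd1]; simp [h0]
    have hdd : ∀ t, deriv (deriv τ') t = - deriv (deriv τ) t := by
      intro t
      rw [hd1]
      exact deriv.neg
    have hpos' : 0 < deriv (deriv τ') 0 := by rw [hdd]; linarith
    have hne' : ∀ t ∈ Ioo (-δ) 0 ∪ Ioo 0 ε, deriv τ' t * deriv (deriv τ') t ≠ 0 := by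
      intro t ht
      have h1 : deriv τ' t = -deriv τ t := by rw [hd1]
      rw [h1, hdd, neg_mul_neg]
      exact hne t ht
    have hI1' : τ' '' Ioo (-δ) 0 = Neg.neg '' I := by
      rw [← hI1, ← Set.image_comp]
      rfl
    have hI2' : τ' '' Ioo 0 ε = Neg.neg '' I := by
      rw [← hI2, ← Set.image_comp]
      rfl
    have hG' : ∀ t ∈ Ioo (-δ) 0 ∪ Ioo 0 ε, ψ t = (fun s => G (-s)) (τ' t) := by
      intro t ht
      simp only [hτ'def, neg_neg]
      exact hG t ht
    obtain ⟨H, hH, hHeq⟩ := main_pos δ ε hδ hε τ' ψ hτ's hψ hd0 hpos' hne'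
      (Neg.neg '' I) hI1' hI2' (fun s => G (-s)) hG'
    refine ⟨fun s => H (-s), ?_, ?_⟩
    · have hmap : (I ∪ {τ 0}) ⊆ Neg.neg ⁻¹' (Neg.neg '' I ∪ {τ' 0}) := by
        rintro s (hs | hs)
        · exact Or.inl ⟨s, hs, rfl⟩
        · rw [mem_singleton_iff] at hs
          right
          simp [hτ'def, hs]
      have := hH.comp (contDiff_neg.contDiffOn : ContDiffOn ℝ (⊤ : ℕ∞) Neg.neg (I ∪ {τ 0})) hmap
      exact this
    · intro s hs
      have h2 := hHeq ⟨s, hs, rfl⟩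
      simpa using h2
  · exact main_pos δ ε hδ hε τ ψ hτ hψ h0 hpos hne I hI1 hI2 G hG
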